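/- Let Λ = ℤ + ℤi ⊆ ℂ and E = ℂ/Λ, with m, m' the additive endomorphisms of E induced by multiplication by i and −i respectively. Then the set of points (x,y) ∈ E × E with x + x = 0 and y + y = 0 but not (m(x) = x and m'(y) = y) has exactly 12 elements. (These are the twelve points of E × E whose isotropy subgroup under the order-4 group generated by diag(i,−i) is exactly ⟨±I⟩.) -/

import Mathlib

noncomputable abbrev myL : AddSubgroup ℂ := AddSubgroup.closure ({1, Complex.I} : Set ℂ)

lemma mem_myL_iff (z : ℂ) : z ∈ myL ↔ ∃ a b : ℤ, z = a + b * Complex.I := by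
  constructor
  · intro hz
    induction hz using AddSubgroup.closure_induction with
    | mem w hw =>
      rcases hw with h | h
      · exact ⟨1, 0, by simp [h]⟩
      · exact ⟨0, 1, by simp [Set.mem_singleton_iff.mp h]⟩
    | zero => exact ⟨0, 0, by simp⟩
    | add x y hx hy ihx ihy =>
      obtain ⟨a, b, rfl⟩ := ihx
      obtain ⟨c, d, rfl⟩ := ihy
      exact ⟨a + c, b + d, by push_cast; ring⟩
    | neg x hx ihx =>
      obtain ⟨a, b, rfl⟩ := ihx
      exact ⟨-a, -b, by push_cast; ring⟩
  · rintro ⟨a, b, rfl⟩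
    refine add_mem ?_ ?_
    · have := AddSubgroup.zsmul_mem myL (AddSubgroup.subset_closure (Set.mem_insert _ _)) a
      rwa [zsmul_eq_mul, mul_one] at this
    · have := AddSubgroup.zsmul_mem myL (AddSubgroup.subset_closure (Set.mem_insert_of_mem _ rfl)) b
      rwa [zsmul_eq_mul] at this

lemma qeq (z w : ℂ) : (QuotientAddGroup.mk z : ℂ ⧸ myL) = QuotientAddGroup.mk w ↔ -z + w ∈ myL :=
  QuotientAddGroup.eq

noncomputable def ff (v : ZMod 2 × ZMod 2) : ℂ ⧸ myL :=
  QuotientAddGroup.mk (((v.1.val : ℂ) + (v.2.val : ℂ) * Complex.I) / 2)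

lemma ff_inj : Function.Injective ff := by
  intro v w h
  rw [ff, ff, qeq, mem_myL_iff] at h
  obtain ⟨a, b, hab⟩ := h
  have h2 : ((w.1.val : ℂ) - v.1.val) + ((w.2.val : ℂ) - v.2.val) * Complex.I
      = 2*a + 2*b*Complex.I := by linear_combination 2*hab
  simp only [Complex.ext_iff, Complex.add_re, Complex.add_im, Complex.sub_re, Complex.sub_im,
    Complex.mul_re, Complex.mul_im, Complex.I_re, Complex.I_im, Complex.natCast_re,
    Complex.natCast_im, Complex.intCast_re, Complex.intCast_im, Complex.re_ofNat,
    Complex.im_ofNat] at h2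
  have e1r : (w.1.val : ℝ) - v.1.val = 2*a := by linarith [h2.1]
  have e2r : (w.2.val : ℝ) - v.2.val = 2*b := by linarith [h2.2]
  have e1 : (w.1.val : ℤ) - v.1.val = 2*a := by exact_mod_cast e1r
  have e2 : (w.2.val : ℤ) - v.2.val = 2*b := by exact_mod_cast e2r
  have l1 := ZMod.val_lt v.1
  have l2 := ZMod.val_lt w.1
  have l3 := ZMod.val_lt v.2
  have l4 := ZMod.val_lt w.2
  have : v.1.val = w.1.val ∧ v.2.val = w.2.val := by omega
  exact Prod.ext (ZMod.val_injective _ this.1) (ZMod.val_injective _ this.2)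

lemma parity (a : ℤ) : ∃ a' : ℤ, a - ((a : ZMod 2).val : ℤ) = 2 * a' := by
  have h0 : (((a - ((a : ZMod 2).val : ℤ)) : ℤ) : ZMod 2) = 0 := by
    push_cast
    simp [ZMod.natCast_val, ZMod.cast_id]
  exact (ZMod.intCast_zmod_eq_zero_iff_dvd _ 2).mp h0

lemma ff_surj (x : ℂ ⧸ myL) (hx : x + x = 0) : ∃ v, ff v = x := by
  induction x using QuotientAddGroup.induction_on with
  | H z =>
    have hz : z + z ∈ myL := by
      rwa [← QuotientAddGroup.mk_add, QuotientAddGroup.eq_zero_iff] at hx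
    rw [mem_myL_iff] at hz
    obtain ⟨a, b, hab⟩ := hz
    obtain ⟨a', ha'⟩ := parity a
    obtain ⟨b', hb'⟩ := parity b
    refine ⟨((a : ZMod 2), (b : ZMod 2)), ?_⟩
    rw [ff, qeq, mem_myL_iff]
    refine ⟨a', b', ?_⟩
    have ha'c : (a : ℂ) - (((a : ZMod 2).val : ℕ) : ℂ) = 2 * a' := by exact_mod_cast ha'
    have hb'c : (b : ℂ) - (((b : ZMod 2).val : ℕ) : ℂ) = 2 * b' := by exact_mod_cast hb'
    linear_combination hab / 2 + ha'c / 2 + hb'c / 2 * Complex.I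

lemma ff_swap_I (v : ZMod 2 × ZMod 2) :
    (QuotientAddGroup.mk (Complex.I * (((v.1.val : ℂ) + (v.2.val : ℂ) * Complex.I) / 2)) : ℂ ⧸ myL)
      = ff (v.2, v.1) := by
  rw [ff, qeq, mem_myL_iff]
  exact ⟨v.2.val, 0, by simp only [Int.cast_natCast, Int.cast_zero]; linear_combination (-((v.2.val : ℂ))/2) * Complex.I_sq⟩

lemma ff_swap_negI (v : ZMod 2 × ZMod 2) :
    (QuotientAddGroup.mk (-Complex.I * (((v.1.val : ℂ) + (v.2.val : ℂ) * Complex.I) / 2)) : ℂ ⧸ myL)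
      = ff (v.2, v.1) := by
  rw [ff, qeq, mem_myL_iff]
  exact ⟨0, v.1.val, by simp only [Int.cast_natCast, Int.cast_zero]; linear_combination (((v.2.val : ℂ))/2) * Complex.I_sq⟩

lemma ff_tor (v : ZMod 2 × ZMod 2) : ff v + ff v = 0 := by
  rw [ff, ← QuotientAddGroup.mk_add, QuotientAddGroup.eq_zero_iff, mem_myL_iff]
  exact ⟨v.1.val, v.2.val, by push_cast; ring⟩

theorem stmt10
    (m m' : (ℂ ⧸ AddSubgroup.closure ({1, Complex.I} : Set ℂ)) →+
            (ℂ ⧸ AddSubgroup.closure ({1, Complex.I} : Set ℂ)))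
    (hm : ∀ z : ℂ, m (QuotientAddGroup.mk z) = QuotientAddGroup.mk (Complex.I * z))
    (hm' : ∀ z : ℂ, m' (QuotientAddGroup.mk z) = QuotientAddGroup.mk (-Complex.I * z)) :
    Nat.card {p : (ℂ ⧸ AddSubgroup.closure ({1, Complex.I} : Set ℂ)) ×
        (ℂ ⧸ AddSubgroup.closure ({1, Complex.I} : Set ℂ)) //
        (p.1 + p.1 = 0 ∧ p.2 + p.2 = 0) ∧ ¬(m p.1 = p.1 ∧ m' p.2 = p.2)} = 12 := by
  have key : ∀ v : ZMod 2 × ZMod 2, m (ff v) = ff (v.2, v.1) := fun v => by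
    rw [ff, hm]; exact ff_swap_I v
  have key' : ∀ v : ZMod 2 × ZMod 2, m' (ff v) = ff (v.2, v.1) := fun v => by
    rw [ff, hm']; exact ff_swap_negI v
  have fixiff : ∀ v : ZMod 2 × ZMod 2, (m (ff v) = ff v ↔ v.1 = v.2) := fun v => by
    rw [key]
    constructor
    · intro h
      exact (congrArg Prod.fst (ff_inj h)).symm
    · intro h
      exact congrArg ff (Prod.ext h.symm h)
  have fixiff' : ∀ v : ZMod 2 × ZMod 2, (m' (ff v) = ff v ↔ v.1 = v.2) := fun v => by
    rw [key']
    constructor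
    · intro h
      exact (congrArg Prod.fst (ff_inj h)).symm
    · intro h
      exact congrArg ff (Prod.ext h.symm h)
  have hbij : Function.Bijective
      (fun w : {w : (ZMod 2 × ZMod 2) × (ZMod 2 × ZMod 2) // ¬(w.1.1 = w.1.2 ∧ w.2.1 = w.2.2)} =>
        (⟨(ff w.1.1, ff w.1.2),
          ⟨ff_tor _, ff_tor _⟩,
          fun h => w.2 ⟨(fixiff _).mp h.1, (fixiff' _).mp h.2⟩⟩ :
          {p : (ℂ ⧸ AddSubgroup.closure ({1, Complex.I} : Set ℂ)) ×
              (ℂ ⧸ AddSubgroup.closure ({1, Complex.I} : Set ℂ)) //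
            (p.1 + p.1 = 0 ∧ p.2 + p.2 = 0) ∧ ¬(m p.1 = p.1 ∧ m' p.2 = p.2)})) := by
    constructor
    · intro w u h
      have h1 : ff w.1.1 = ff u.1.1 := congrArg (Prod.fst ∘ Subtype.val) h
      have h2 : ff w.1.2 = ff u.1.2 := congrArg (Prod.snd ∘ Subtype.val) h
      exact Subtype.ext (Prod.ext (ff_inj h1) (ff_inj h2))
    · rintro ⟨⟨x, y⟩, ⟨hx, hy⟩, hc⟩
      obtain ⟨v, hv⟩ := ff_surj x hx
      obtain ⟨u, hu⟩ := ff_surj y hy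
      refine ⟨⟨(v, u), fun h => hc ?_⟩, Subtype.ext (Prod.ext hv hu)⟩
      rw [← hv, ← hu]
      exact ⟨(fixiff v).mpr h.1, (fixiff' u).mpr h.2⟩
  rw [← Nat.card_eq_of_bijective _ hbij, Nat.card_eq_fintype_card]
  decide
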